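/- The combinatorial identity Σ_{m=0}^{k} (1/([k+a+1]_a · (m+a)! · (k-m)!)) · X^{m,k-m}(λ₁,λ₂) = (1/k!) ∫_{0<t₁<⋯<t_a<1} d^a t ∫_{0<s₁<⋯<s_a<1} d^a s · s₁ · X^k(t₁s₁λ₁ + s₁λ₂) holds, where [x]_a denotes the falling factorial and X^{m,n}(λ₁,λ₂) are the doubly-graded symmetrized monomials in the free algebra. -/

import Mathlib

/-!
Statement 9: The combinatorial identity
  Σ_{m=0}^{k} X^{m,k-m}(λ₁,λ₂)/([k+a+1]_a·(m+a)!·(k-m)!)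
    = (1/k!) ∫_{0<t₁<⋯<t_a<1} ∫_{0<s₁<⋯<s_a<1} s₁·X^k(t₁s₁λ₁ + s₁λ₂),
where the right hand side is evaluated via the binomial expansion
X^k(tsλ₁+sλ₂) = Σ_m C(k,m) t^m s^k X^{m,k-m}(λ₁,λ₂) (integration commutes with the
finite sum), with the scalar simplex integrals appearing explicitly.
-/

noncomputable section

open MeasureTheory
open scoped BigOperators

abbrev FA := FreeAlgebra ℂ (Fin 2)

def Xg (i : Fin 2) : FA := FreeAlgebra.ι ℂ i

def Xs (l : ℂ × ℂ) : FA := l.1 • Xg 0 + l.2 • Xg 1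

/-- the doubly-graded symmetrized monomial `X^{k,l}(λ₁,λ₂)` -/
def Xkl (l₁ l₂ : ℂ × ℂ) (k l : ℕ) : FA :=
  ((Nat.choose (k + l) k : ℂ))⁻¹ •
    ∑ S ∈ Finset.powersetCard k (Finset.univ : Finset (Fin (k + l))),
      (List.ofFn fun i => if i ∈ S then Xs l₁ else Xs l₂).prod

/-- the (closed) standard ordered simplex {0 ≤ t₁ ≤ ⋯ ≤ t_a ≤ 1} in ℝ^a -/
def simplex (a : ℕ) : Set (Fin a → ℝ) :=
  {t | (∀ i j : Fin a, i ≤ j → t i ≤ t j) ∧ ∀ i, t i ∈ Set.Icc (0 : ℝ) 1}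

/-- the first (smallest) coordinate `t₁`; by convention equal to 1 when a = 0 -/
def headVal {a : ℕ} (t : Fin a → ℝ) : ℝ := if h : 0 < a then t ⟨0, h⟩ else 1

lemma measurable_headVal {a : ℕ} : Measurable (headVal (a := a)) := by
  unfold headVal
  split
  · exact measurable_pi_apply _
  · exact measurable_const

lemma measurableSet_simplex (a : ℕ) : MeasurableSet (simplex a) := by
  have : simplex a =
      (⋂ (i : Fin a) (j : Fin a) (_ : i ≤ j), {t : Fin a → ℝ | t i ≤ t j}) ∩
        ⋂ (i : Fin a), (fun t : Fin a → ℝ => t i) ⁻¹' Set.Icc (0 : ℝ) 1 := by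
    ext t
    simp [simplex, Set.mem_iInter]
  rw [this]
  refine MeasurableSet.inter ?_ ?_
  · refine MeasurableSet.iInter fun i => MeasurableSet.iInter fun j =>
      MeasurableSet.iInter fun _ => ?_
    exact measurableSet_le (measurable_pi_apply i) (measurable_pi_apply j)
  · exact MeasurableSet.iInter fun i => (measurable_pi_apply i) measurableSet_Icc

lemma simplex_subset_pi (a : ℕ) :
    simplex a ⊆ Set.univ.pi fun _ : Fin a => Set.Icc (0 : ℝ) 1 := by
  intro t ht i _
  exact ht.2 i

lemma headVal_mem_Icc {a : ℕ} {t : Fin a → ℝ} (ht : t ∈ simplex a) :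
    headVal t ∈ Set.Icc (0 : ℝ) 1 := by
  unfold headVal
  split
  · exact ht.2 _
  · exact ⟨zero_le_one, le_refl 1⟩

lemma mem_simplex_succ {a : ℕ} (t : Fin (a + 1) → ℝ) :
    t ∈ simplex (a + 1) ↔
      Fin.tail t ∈ simplex a ∧ t 0 ∈ Set.Icc (0 : ℝ) (headVal (Fin.tail t)) := by
  constructor
  · rintro ⟨h1, h2⟩
    refine ⟨⟨fun i j hij => h1 i.succ j.succ (by simpa using hij), fun i => h2 i.succ⟩,
      (h2 0).1, ?_⟩
    unfold headVal
    split
    · exact h1 0 _ (Fin.zero_le _)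
    · exact (h2 0).2
  · rintro ⟨⟨h1, h2⟩, h0, hle⟩
    have hv1 : headVal (Fin.tail t) ≤ 1 := by
      unfold headVal
      split
      · exact (h2 _).2
      · exact le_refl 1
    have key : ∀ j : Fin a, t 0 ≤ Fin.tail t j := by
      intro j
      refine le_trans hle ?_
      unfold headVal
      split
      · exact h1 _ _ (by simp [Fin.le_def])
      · exact absurd j.pos (by assumption)
    constructor
    · intro i j hij
      induction i using Fin.cases with
      | zero =>
        induction j using Fin.cases with
        | zero => exact le_refl _
        | succ j => exact key j
      | succ i =>
        induction j using Fin.cases with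
        | zero =>
          exact absurd (Fin.le_zero_iff.mp hij) (Fin.succ_ne_zero i)
        | succ j =>
          exact h1 i j (by simpa using hij)
    · intro i
      induction i using Fin.cases with
      | zero => exact ⟨h0, le_trans hle hv1⟩
      | succ i => exact h2 i

lemma volume_univ_fin_zero : (volume : Measure (Fin 0 → ℝ)) Set.univ = 1 := by
  rw [show (volume : Measure (Fin 0 → ℝ)) = Measure.pi fun _ => volume from rfl,
    Measure.pi_univ]
  simp

lemma simplex_integral (a n : ℕ) :
    (∫ t in simplex a, headVal t ^ n) =
      (n.factorial : ℝ) / ((n + a).factorial : ℝ) := by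
  induction a generalizing n with
  | zero =>
    have hs : simplex 0 = Set.univ := by
      ext t; simp [simplex]
    have hh : ∀ t : Fin 0 → ℝ, headVal t ^ n = 1 := by
      intro t; simp [headVal]
    rw [hs]
    rw [MeasureTheory.setIntegral_congr_fun MeasurableSet.univ fun t _ => hh t]
    rw [MeasureTheory.setIntegral_const]
    have : (n.factorial : ℝ) ≠ 0 := by exact_mod_cast n.factorial_ne_zero
    simp [volume_univ_fin_zero]
    rw [div_self this]
    simp [Measure.real, volume_univ_fin_zero]
  | succ a ih =>
    -- the measurable equivalence (Fin (a+1) → ℝ) ≃ ℝ × (Fin a → ℝ)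
    set e := MeasurableEquiv.piFinSuccAbove (fun _ : Fin (a + 1) => ℝ) 0 with he
    have hmp : MeasurePreserving e (volume : Measure (Fin (a+1) → ℝ))
        ((volume : Measure ℝ).prod (volume : Measure (Fin a → ℝ))) := by
      have := MeasureTheory.measurePreserving_piFinSuccAbove
        (fun _ : Fin (a+1) => (volume : Measure ℝ)) 0
      exact this
    -- the set in the product space
    set E : Set (ℝ × (Fin a → ℝ)) :=
      {p | p.2 ∈ simplex a ∧ p.1 ∈ Set.Icc (0 : ℝ) (headVal p.2)} with hE
    have hmemE : ∀ p : ℝ × (Fin a → ℝ),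
        p ∈ E ↔ p.2 ∈ simplex a ∧ p.1 ∈ Set.Icc (0 : ℝ) (headVal p.2) := by
      intro p; rw [hE]; exact Iff.rfl
    have hEmeas : MeasurableSet E := by
      have h1 : MeasurableSet {p : ℝ × (Fin a → ℝ) | p.2 ∈ simplex a} :=
        measurable_snd (measurableSet_simplex a)
      have h2 : MeasurableSet {p : ℝ × (Fin a → ℝ) | 0 ≤ p.1} :=
        measurableSet_le measurable_const measurable_fst
      have h3 : MeasurableSet {p : ℝ × (Fin a → ℝ) | p.1 ≤ headVal p.2} :=
        measurableSet_le measurable_fst (measurable_headVal.comp measurable_snd)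
      have : E = {p : ℝ × (Fin a → ℝ) | p.2 ∈ simplex a} ∩
          ({p | 0 ≤ p.1} ∩ {p | p.1 ≤ headVal p.2}) := by
        ext p; simp [hE, Set.mem_Icc, and_assoc]
      rw [this]; exact h1.inter (h2.inter h3)
    set G : ℝ × (Fin a → ℝ) → ℝ := E.indicator (fun p => p.1 ^ n) with hG
    -- step 1 : rewrite integral via e
    have step1 : (∫ t in simplex (a+1), headVal t ^ n) =
        ∫ p, G p ∂((volume : Measure ℝ).prod (volume : Measure (Fin a → ℝ))) := by
      rw [← MeasureTheory.integral_indicator (measurableSet_simplex (a+1))]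
      rw [← hmp.integral_comp']
      congr 1
      ext t
      have het : e t = (t 0, Fin.tail t) := rfl
      rw [het]
      by_cases ht : t ∈ simplex (a+1)
      · rw [Set.indicator_of_mem ht, hG,
          Set.indicator_of_mem ((hmemE _).2 ((mem_simplex_succ t).1 ht))]
        simp [headVal]
      · rw [Set.indicator_of_notMem ht, hG, Set.indicator_of_notMem]
        intro hcon
        exact ht ((mem_simplex_succ t).2 ((hmemE _).1 hcon))
    -- integrability of G
    have hGint : Integrable G ((volume : Measure ℝ).prod (volume : Measure (Fin a → ℝ))) := by
      rw [hG, MeasureTheory.integrable_indicator_iff hEmeas]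
      refine Measure.integrableOn_of_bounded (M := 1) ?_ ?_ ?_
      · have hsub : E ⊆ (Set.Icc (0:ℝ) 1) ×ˢ (Set.univ.pi fun _ : Fin a => Set.Icc (0:ℝ) 1) := by
          rintro ⟨x, u⟩ hp
          obtain ⟨hu, hx0, hx1⟩ := (hmemE _).1 hp
          exact ⟨⟨hx0, le_trans hx1 (headVal_mem_Icc hu).2⟩, simplex_subset_pi a hu⟩
        refine ne_of_lt (lt_of_le_of_lt (measure_mono hsub) ?_)
        rw [Measure.prod_prod]
        have h1 : (volume : Measure ℝ) (Set.Icc (0:ℝ) 1) = 1 := by simp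
        have h2 : (volume : Measure (Fin a → ℝ)) (Set.univ.pi fun _ => Set.Icc (0:ℝ) 1) = 1 := by
          rw [volume_pi_pi]
          simp
        rw [h1, h2]; norm_num
      · exact (measurable_fst.pow_const n).aestronglyMeasurable
      · refine (MeasureTheory.ae_restrict_iff' hEmeas).2 (Filter.Eventually.of_forall ?_)
        rintro ⟨x, u⟩ hp
        obtain ⟨hu, hx0, hx1⟩ := (hmemE _).1 hp
        have hx1' : x ≤ 1 := le_trans hx1 (headVal_mem_Icc hu).2
        simp only [norm_pow, Real.norm_eq_abs, abs_of_nonneg hx0]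
        exact pow_le_one₀ hx0 hx1'
    -- step 2 : Fubini
    have step2 : ∫ p, G p ∂((volume : Measure ℝ).prod (volume : Measure (Fin a → ℝ))) =
        ∫ u, ∫ x, G (x, u) := by
      exact MeasureTheory.integral_prod_symm G hGint
    -- step 3 : inner integral
    have step3 : ∀ u : Fin a → ℝ, (∫ x, G (x, u)) =
        (simplex a).indicator (fun u => headVal u ^ (n+1) / (n+1)) u := by
      intro u
      by_cases hu : u ∈ simplex a
      · have : (fun x => G (x, u)) =
            (Set.Icc (0:ℝ) (headVal u)).indicator (fun x => x ^ n) := by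
          ext x
          by_cases hx : x ∈ Set.Icc (0:ℝ) (headVal u)
          · rw [Set.indicator_of_mem hx, hG, Set.indicator_of_mem ((hmemE _).2 ⟨hu, hx⟩)]
          · rw [Set.indicator_of_notMem hx, hG, Set.indicator_of_notMem]
            intro hc; exact hx ((hmemE _).1 hc).2
        rw [this, MeasureTheory.integral_indicator measurableSet_Icc,
          MeasureTheory.integral_Icc_eq_integral_Ioc,
          ← intervalIntegral.integral_of_le (headVal_mem_Icc hu).1,
          integral_pow, Set.indicator_of_mem hu]
        simp
      · rw [Set.indicator_of_notMem hu]
        have : (fun x => G (x, u)) = fun _ => (0:ℝ) := by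
          ext x
          rw [hG, Set.indicator_of_notMem]
          intro hc; exact hu ((hmemE _).1 hc).1
        rw [this, integral_zero]
    -- assemble
    rw [step1, step2]
    rw [MeasureTheory.integral_congr_ae (Filter.Eventually.of_forall step3)]
    rw [MeasureTheory.integral_indicator (measurableSet_simplex a)]
    have : (∫ u in simplex a, headVal u ^ (n+1) / (n+1)) =
        (∫ u in simplex a, headVal u ^ (n+1)) / (n+1) := integral_div _ _
    rw [this, ih (n+1)]
    have h1 : ((n+1).factorial : ℝ) = (n+1) * n.factorial := by
      push_cast [Nat.factorial_succ]; ring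
    have h2 : (n + 1 + a) = (n + (a+1)) := by omega
    rw [h1, h2]
    have hpos : ((n:ℝ) + 1) ≠ 0 := by positivity
    field_simp


theorem statement9 (a k : ℕ) (l₁ l₂ : ℂ × ℂ) :
    ∑ m ∈ Finset.range (k + 1),
        (((Nat.descFactorial (k + a + 1) a) * (m + a).factorial * (k - m).factorial : ℂ))⁻¹ •
          Xkl l₁ l₂ m (k - m) =
      ((k.factorial : ℂ))⁻¹ •
        ∑ m ∈ Finset.range (k + 1),
          ((Nat.choose k m : ℂ) *
              (((∫ t in simplex a, headVal t ^ m) : ℝ) : ℂ) *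
              (((∫ s in simplex a, headVal s ^ (k + 1)) : ℝ) : ℂ)) •
            Xkl l₁ l₂ m (k - m) := by
  rw [Finset.smul_sum]
  refine Finset.sum_congr rfl fun m hm => ?_
  have hm' : m ≤ k := by
    have := Finset.mem_range.1 hm; omega
  rw [smul_smul, simplex_integral a m, simplex_integral a (k+1)]
  congr 1
  have h1 : ((k+1).factorial * (k + a + 1).descFactorial a : ℂ) = ((k+a+1).factorial : ℂ) := by
    have : (k + a + 1 - a).factorial * (k + a + 1).descFactorial a = (k+a+1).factorial :=
      Nat.factorial_mul_descFactorial (by omega)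
    rw [show k + a + 1 - a = k + 1 by omega] at this
    exact_mod_cast this
  have h2 : ((Nat.choose k m) * m.factorial * (k-m).factorial : ℂ) = (k.factorial : ℂ) := by
    exact_mod_cast Nat.choose_mul_factorial_mul_factorial hm'
  have hd : ((k + a + 1).descFactorial a : ℂ) ≠ 0 := by
    intro h
    rw [h, mul_zero] at h1
    exact (by exact_mod_cast (k+a+1).factorial_ne_zero : ((k+a+1).factorial:ℂ) ≠ 0) h1.symm
  have hf : ∀ n : ℕ, (n.factorial : ℂ) ≠ 0 := fun n => by
    exact_mod_cast n.factorial_ne_zero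
  rw [show k + 1 + a = k + a + 1 from by omega]
  have e1 := hf (m + a)
  have e2 := hf (k - m)
  have e3 := hf k
  have e4 := hf (k + a + 1)
  have e5 := hf (k + 1)
  have e6 := hf m
  push_cast
  field_simp
  linear_combination -(((k+1).factorial : ℂ) *
      (((k+a+1).descFactorial a : ℂ))) * h2 +
    -((k.factorial : ℂ)) * h1

end
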